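/- Let d ≥ 1, let b be a real number with b > 1, and let w be a permutation of {1,…,d}. For each i ∈ {1,…,d} define z_i = ∑_{n=0}^{∞} (w^{n+1}(i) − w^n(i))/bⁿ (the series converges absolutely). Then (z₁,…,z_d) is the unique solution of the system z_i = w(i) − i + z_{w(i)}/b for all i ∈ {1,…,d}. -/

import Mathlib

/-- For a permutation `w` of `{1,…,d}` and `b > 1`, the vector
`z_i = ∑_{n=0}^∞ (w^{n+1}(i) − w^n(i))/bⁿ` is the unique solution of the system
`z_i = w(i) − i + z_{w(i)}/b` for `i ∈ {1,…,d}`. -/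
theorem z_unique_solution (d : ℕ) (hd : 1 ≤ d) (b : ℝ) (hb : 1 < b)
    (w : ℕ → ℕ) (hw : Set.BijOn w (Set.Icc 1 d) (Set.Icc 1 d))
    (z : ℕ → ℝ)
    (hz : ∀ i ∈ Set.Icc 1 d,
      z i = ∑' n : ℕ, ((w^[n + 1] i : ℝ) - (w^[n] i : ℝ)) / b ^ n) :
    (∀ i ∈ Set.Icc 1 d, z i = (w i : ℝ) - (i : ℝ) + z (w i) / b) ∧
    (∀ z' : ℕ → ℝ,
      (∀ i ∈ Set.Icc 1 d, z' i = (w i : ℝ) - (i : ℝ) + z' (w i) / b) →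
      ∀ i ∈ Set.Icc 1 d, z' i = z i) := by
  have hb0 : (0:ℝ) < b := lt_trans one_pos hb
  have hmaps : ∀ i ∈ Set.Icc 1 d, ∀ n : ℕ, w^[n] i ∈ Set.Icc 1 d := by
    intro i hi n
    induction n with
    | zero => simpa using hi
    | succ n ih =>
      rw [Function.iterate_succ_apply']
      exact hw.mapsTo ih
  have hinvb : (0:ℝ) ≤ 1/b ∧ 1/b < 1 := by
    constructor
    · positivity
    · rw [div_lt_one hb0]; exact hb
  have hsum : ∀ i ∈ Set.Icc 1 d,
      Summable fun n : ℕ => ((w^[n + 1] i : ℝ) - (w^[n] i : ℝ)) / b ^ n := by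
    intro i hi
    apply Summable.of_norm_bounded (g := fun n => (d:ℝ) * (1/b)^n)
    · exact (summable_geometric_of_lt_one hinvb.1 hinvb.2).mul_left _
    · intro n
      have h1 := hmaps i hi (n+1)
      have h2 := hmaps i hi n
      rw [Real.norm_eq_abs, div_pow, one_pow, mul_one_div, abs_div, abs_pow, abs_of_pos hb0]
      gcongr
      rw [abs_sub_le_iff]
      constructor
      · have : (w^[n+1] i : ℝ) ≤ d := by exact_mod_cast h1.2
        have : (0:ℝ) ≤ (w^[n] i : ℝ) := by positivity
        linarith [this, (show (w^[n+1] i : ℝ) ≤ d by exact_mod_cast h1.2)]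
      · have : (w^[n] i : ℝ) ≤ d := by exact_mod_cast h2.2
        have h0 : (0:ℝ) ≤ (w^[n+1] i : ℝ) := by positivity
        linarith
  constructor
  · intro i hi
    have hwi : w i ∈ Set.Icc 1 d := hw.mapsTo hi
    rw [hz i hi, hz (w i) hwi]
    rw [Summable.tsum_eq_zero_add (hsum i hi)]
    simp only [pow_zero, div_one, Function.iterate_one, Function.iterate_zero, id_eq]
    congr 1
    have key : ∀ n : ℕ, ((w^[n + 1 + 1] i : ℝ) - (w^[n + 1] i : ℝ)) / b ^ (n + 1)
        = (((w^[n + 1] (w i) : ℝ) - (w^[n] (w i) : ℝ)) / b ^ n) / b := by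
      intro n
      rw [← Function.iterate_succ_apply, ← Function.iterate_succ_apply]
      rw [pow_succ, div_div]
    rw [tsum_congr key, tsum_div_const]
  · intro z' hz' i hi
    set e : ℕ → ℝ := fun j => z' j - z j with he
    have hstep : ∀ j ∈ Set.Icc 1 d, e j = e (w j) / b := by
      intro j hj
      have h1 := hz' j hj
      have h2 : z j = (w j : ℝ) - (j : ℝ) + z (w j) / b := by
        have hwj : w j ∈ Set.Icc 1 d := hw.mapsTo hj
        rw [hz j hj, hz (w j) hwj]
        rw [Summable.tsum_eq_zero_add (hsum j hj)]
        simp only [pow_zero, div_one, Function.iterate_one, Function.iterate_zero, id_eq]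
        congr 1
        have key : ∀ n : ℕ, ((w^[n + 1 + 1] j : ℝ) - (w^[n + 1] j : ℝ)) / b ^ (n + 1)
            = (((w^[n + 1] (w j) : ℝ) - (w^[n] (w j) : ℝ)) / b ^ n) / b := by
          intro n
          rw [← Function.iterate_succ_apply, ← Function.iterate_succ_apply]
          rw [pow_succ, div_div]
        rw [tsum_congr key, tsum_div_const]
      simp only [he]
      rw [h1, h2]
      ring
    have hiter : ∀ n : ℕ, e i = e (w^[n] i) / b ^ n := by
      intro n
      induction n with
      | zero => simp
      | succ n ih =>
        rw [ih, hstep _ (hmaps i hi n), Function.iterate_succ_apply', pow_succ, div_div, mul_comm]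
    -- bound
    obtain ⟨M, hM⟩ : ∃ M : ℝ, ∀ j ∈ Set.Icc 1 d, |e j| ≤ M := by
      refine ⟨∑ j ∈ Finset.Icc 1 d, |e j|, fun j hj => ?_⟩
      apply Finset.single_le_sum (f := fun j => |e j|) (fun _ _ => abs_nonneg _)
      simpa [Finset.mem_Icc] using hj
    have hbound : ∀ n : ℕ, |e i| ≤ M * (1/b)^n := by
      intro n
      rw [hiter n, abs_div, abs_pow, abs_of_pos hb0, div_pow, one_pow, mul_one_div]
      gcongr
      exact hM _ (hmaps i hi n)
    have htend : Filter.Tendsto (fun n : ℕ => M * (1/b)^n) Filter.atTop (nhds 0) := by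
      rw [show (0:ℝ) = M * 0 by ring]
      exact Filter.Tendsto.const_mul _ (tendsto_pow_atTop_nhds_zero_of_lt_one hinvb.1 hinvb.2)
    have : |e i| ≤ 0 := ge_of_tendsto' htend hbound
    have he0 : e i = 0 := abs_eq_zero.mp (le_antisymm this (abs_nonneg _))
    simpa [he, sub_eq_zero] using he0
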